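/- Let N ∈ ℕ, N ≥ 2, and let g₁, …, g_N denote the gaps of the first N terms of the sequence x_n := {log(2n−1)/log 2} on the torus. Then the multiset of gap lengths, arranged in ascending order h₁ ≤ h₂ ≤ … ≤ h_N, satisfies h_i = (log(2N + 1 − i) − log(2N − i))/log(2) for i = 1, …, N; equivalently, the multiset of gaps equals { (log(m+1) − log(m))/log(2) : N ≤ m ≤ 2N−1 }. -/

import Mathlib

/-- The sequence `x_n = {log(2n-1)/log 2}`. -/
noncomputable def xseq (n : ℕ) : ℝ := Int.fract (Real.log (2 * (n : ℝ) - 1) / Real.log 2)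

lemma logb_two_pow (k : ℕ) : Real.logb 2 ((2:ℝ)^k) = k := by
  rw [Real.logb_pow, Real.logb_self_eq_one (by norm_num), mul_one]

lemma logb_two_double {t : ℝ} (ht : t ≠ 0) : Real.logb 2 (2*t) = 1 + Real.logb 2 t := by
  rw [Real.logb_mul (by norm_num) ht, Real.logb_self_eq_one (by norm_num)]

lemma fract_logb_nat {k q : ℕ} (h1 : 2^k ≤ q) (h2 : q < 2^(k+1)) :
    Int.fract (Real.logb 2 (q:ℝ)) = Real.logb 2 (q:ℝ) - k := by
  have hq0 : 0 < q := lt_of_lt_of_le (show 0 < 2^k from Nat.pow_pos (by norm_num)) h1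
  have hq : (0:ℝ) < q := by exact_mod_cast hq0
  have hfl : ⌊Real.logb 2 (q:ℝ)⌋ = (k:ℤ) := by
    rw [Int.floor_eq_iff]
    constructor
    · calc ((k:ℤ):ℝ) = Real.logb 2 ((2:ℝ)^k) := by rw [logb_two_pow]; norm_num
        _ ≤ Real.logb 2 q := by
            apply Real.logb_le_logb_of_le (by norm_num) (by positivity)
            exact_mod_cast h1
    · calc Real.logb 2 (q:ℝ) < Real.logb 2 ((2:ℝ)^(k+1)) := by
            apply Real.logb_lt_logb (by norm_num) hq
            exact_mod_cast h2
        _ = ((k:ℤ):ℝ) + 1 := by rw [logb_two_pow]; push_cast; ring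
  rw [Int.fract, hfl]; norm_num

lemma fract_logb_double_nat {q : ℕ} (hq : 1 ≤ q) :
    Int.fract (Real.logb 2 ((2*q : ℕ) : ℝ)) = Int.fract (Real.logb 2 (q:ℝ)) := by
  have hq0 : (q:ℝ) ≠ 0 := by positivity
  push_cast
  rw [Real.logb_mul (by norm_num) hq0, Real.logb_self_eq_one (by norm_num),
    add_comm, ← Int.cast_one, Int.fract_add_intCast]

lemma xseq_eq {n : ℕ} (hn : 1 ≤ n) :
    xseq n = Int.fract (Real.logb 2 ((2*n-1 : ℕ) : ℝ)) := by
  unfold xseq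
  rw [Real.log_div_log]
  congr 1
  have : ((2*n-1 : ℕ) : ℝ) = 2*(n:ℝ) - 1 := by
    have : 1 ≤ 2*n := by omega
    push_cast [this]; ring
  rw [this]

lemma image_xseq (N : ℕ) (hN : 2 ≤ N) :
    Finset.image xseq (Finset.Icc 1 N) =
      Finset.image (fun t : ℕ => Int.fract (Real.logb 2 (t:ℝ))) (Finset.Icc N (2*N-1)) := by
  have claim1 : ∀ d q : ℕ, 1 ≤ q → q ≤ 2*N-1 → 2*N-1-q ≤ d →
      ∃ t, (N ≤ t ∧ t ≤ 2*N-1) ∧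
        Int.fract (Real.logb 2 (t:ℝ)) = Int.fract (Real.logb 2 (q:ℝ)) := by
    intro d
    induction d with
    | zero => intro q h1 h2 h3
              exact ⟨q, ⟨by omega, h2⟩, rfl⟩
    | succ d ih =>
        intro q h1 h2 h3
        by_cases hq : N ≤ q
        · exact ⟨q, ⟨hq, h2⟩, rfl⟩
        · obtain ⟨t, ht1, ht2⟩ := ih (2*q) (by omega) (by omega) (by omega)
          exact ⟨t, ht1, by rw [ht2, fract_logb_double_nat h1]⟩
  have claim2 : ∀ t : ℕ, 1 ≤ t → t ≤ 2*N-1 →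
      ∃ n, (1 ≤ n ∧ n ≤ N) ∧
        Int.fract (Real.logb 2 ((2*n-1 : ℕ) : ℝ)) = Int.fract (Real.logb 2 (t:ℝ)) := by
    intro t
    induction t using Nat.strong_induction_on with
    | _ t ih =>
      intro h1 h2
      rcases Nat.even_or_odd t with he | ho
      · obtain ⟨s, hs⟩ := he
        obtain ⟨n, hn1, hn2⟩ := ih s (by omega) (by omega) (by omega)
        refine ⟨n, hn1, ?_⟩
        have h2s : 2*s = t := by omega
        rw [hn2, ← fract_logb_double_nat (show 1 ≤ s by omega), h2s]
      · obtain ⟨k, hk⟩ := ho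
        refine ⟨(t+1)/2, ⟨by omega, by omega⟩, ?_⟩
        have : 2*((t+1)/2)-1 = t := by omega
        rw [this]
  ext x
  simp only [Finset.mem_image, Finset.mem_Icc]
  constructor
  · rintro ⟨n, ⟨hn1, hn2⟩, rfl⟩
    obtain ⟨t, ht1, ht2⟩ := claim1 (2*N-1) (2*n-1) (by omega) (by omega) (by omega)
    exact ⟨t, ht1, by rw [ht2, ← xseq_eq hn1]⟩
  · rintro ⟨t, ⟨ht1, ht2⟩, rfl⟩
    obtain ⟨n, hn1, hn2⟩ := claim2 t (by omega) ht2
    exact ⟨n, hn1, by rw [xseq_eq hn1.1, hn2]⟩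

/-- `Kv N` is the exponent with `N ≤ 2^(Kv N) ≤ 2N-1`. -/
def Kv (N : ℕ) : ℕ := Nat.log 2 (2*N-1)
/-- The number of points in the upper branch. -/
def Mv (N : ℕ) : ℕ := 2*N - 2^(Kv N)
/-- The sorted reindexing `[1,N] → [N, 2N-1]`. -/
def mfun (N i : ℕ) : ℕ := 2^(Kv N) + (i-1) - (if i ≤ Mv N then 0 else N)
/-- The sorted sequence of fractional parts. -/
noncomputable def wfun (N i : ℕ) : ℝ :=
  Real.logb 2 ((mfun N i : ℕ) : ℝ) - (if i ≤ Mv N then (Kv N : ℝ) else (Kv N : ℝ) - 1)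

section facts
variable {N : ℕ} (hN : 2 ≤ N)
include hN

lemma hK1 : 2^(Kv N) ≤ 2*N-1 := Nat.pow_log_le_self 2 (by omega)

lemma hK2 : 2*N-1 < 2*2^(Kv N) := by
  have h := Nat.lt_pow_succ_log_self (show 1 < 2 by norm_num) (2*N-1)
  rw [pow_succ] at h
  unfold Kv; omega

lemma hKN : N ≤ 2^(Kv N) := by have := hK2 hN; omega

lemma hM1 : 1 ≤ Mv N := by have := hK1 hN; unfold Mv; omega

lemma hMN : Mv N ≤ N := by have := hKN hN; unfold Mv; omega

lemma hKpos : 1 ≤ Kv N := by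
  have := hKN hN
  by_contra h
  interval_cases h' : (Kv N) <;> omega

lemma hKhalf : 2^(Kv N - 1) ≤ N - 1 := by
  have h1 := hK1 hN
  have h2 : 2^(Kv N) = 2 * 2^(Kv N - 1) := by
    conv_lhs => rw [show Kv N = (Kv N - 1) + 1 from (Nat.succ_pred_eq_of_pos (hKpos hN)).symm]
    rw [pow_succ]; ring
  omega

lemma m_range {i : ℕ} (hi : 1 ≤ i) (hiN : i ≤ N) : N ≤ mfun N i ∧ mfun N i ≤ 2*N-1 := by
  have h1 := hK1 hN; have h2 := hKN hN
  unfold mfun Mv at *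
  split <;> omega

lemma fract_m {i : ℕ} (hi : 1 ≤ i) (hiN : i ≤ N) :
    Int.fract (Real.logb 2 ((mfun N i : ℕ) : ℝ)) = wfun N i := by
  have h1 := hK1 hN; have h2 := hKN hN; have h3 := hKhalf hN; have hKp := hKpos hN
  unfold wfun
  by_cases hc : i ≤ Mv N
  · rw [if_pos hc, fract_logb_nat (k := Kv N) ?_ ?_]
    · unfold mfun; rw [if_pos hc]; omega
    · unfold mfun Mv at *; rw [if_pos hc]
      have : 2^(Kv N + 1) = 2*2^(Kv N) := by ring
      omega
  · rw [if_neg hc, fract_logb_nat (k := Kv N - 1) ?_ ?_]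
    · rw [show ((Kv N - 1 : ℕ):ℝ) = (Kv N : ℝ) - 1 by
        have : (1:ℕ) ≤ Kv N := hKp
        push_cast [this]; ring]
    · unfold mfun Mv at *; rw [if_neg hc]; omega
    · unfold mfun Mv at *; rw [if_neg hc]
      have : 2^(Kv N - 1 + 1) = 2^(Kv N) := by congr 1; omega
      omega

lemma m_pos {i : ℕ} (hi : 1 ≤ i) (hiN : i ≤ N) : (0:ℝ) < ((mfun N i : ℕ) : ℝ) := by
  have h := (m_range hN hi hiN).1
  have : 0 < mfun N i := by omega
  exact_mod_cast this

lemma w_strictmono {i j : ℕ} (hi : 1 ≤ i) (hij : i < j) (hjN : j ≤ N) :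
    wfun N i < wfun N j := by
  have h1 := hK1 hN; have h2 := hKN hN
  have hpi := m_pos hN hi (by omega)
  have hpj := m_pos hN (by omega) hjN
  unfold wfun
  by_cases hcj : j ≤ Mv N
  · have hci : i ≤ Mv N := by omega
    rw [if_pos hci, if_pos hcj]
    have hm : mfun N i < mfun N j := by unfold mfun; rw [if_pos hci, if_pos hcj]; omega
    have := Real.logb_lt_logb (show (1:ℝ) < 2 by norm_num) hpi
      (show ((mfun N i:ℕ):ℝ) < ((mfun N j:ℕ):ℝ) by exact_mod_cast hm)
    linarith
  · by_cases hci : i ≤ Mv N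
    · rw [if_pos hci, if_neg hcj]
      have hub : ((mfun N i:ℕ):ℝ) < 2*((N:ℕ):ℝ) := by
        have h := (m_range hN hi (by omega)).2
        have : mfun N i < 2*N := by omega
        exact_mod_cast this
      have hlb : ((N:ℕ):ℝ) ≤ ((mfun N j:ℕ):ℝ) := by
        exact_mod_cast (m_range hN (by omega) hjN).1
      have hlog2N : Real.logb 2 (2*((N:ℕ):ℝ)) = 1 + Real.logb 2 ((N:ℕ):ℝ) :=
        logb_two_double (by positivity)
      have l1 : Real.logb 2 ((mfun N i:ℕ):ℝ) < Real.logb 2 (2*((N:ℕ):ℝ)) :=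
        Real.logb_lt_logb (by norm_num) hpi hub
      have l2 : Real.logb 2 ((N:ℕ):ℝ) ≤ Real.logb 2 ((mfun N j:ℕ):ℝ) :=
        Real.logb_le_logb_of_le (by norm_num) (by positivity) hlb
      linarith
    · rw [if_neg hci, if_neg hcj]
      have hm : mfun N i < mfun N j := by
        unfold mfun; rw [if_neg hci, if_neg hcj]
        unfold Mv at hci
        omega
      have := Real.logb_lt_logb (show (1:ℝ) < 2 by norm_num) hpi
        (show ((mfun N i:ℕ):ℝ) < ((mfun N j:ℕ):ℝ) by exact_mod_cast hm)
      linarith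

lemma m1_eq : mfun N 1 = 2^(Kv N) := by
  have := hM1 hN; unfold mfun; rw [if_pos this]
  have hp : 0 < 2^(Kv N) := Nat.pow_pos (by norm_num)
  omega

lemma w1_eq : wfun N 1 = 0 := by
  unfold wfun
  rw [if_pos (hM1 hN), m1_eq hN]
  rw [show ((2^(Kv N) : ℕ):ℝ) = (2:ℝ)^(Kv N) by push_cast; ring, logb_two_pow]
  ring

lemma image_m : Finset.image (mfun N) (Finset.Icc 1 N) = Finset.Icc N (2*N-1) := by
  have h1 := hK1 hN; have h2 := hKN hN
  ext t
  simp only [Finset.mem_image, Finset.mem_Icc]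
  constructor
  · rintro ⟨i, ⟨hi1, hi2⟩, rfl⟩
    exact m_range hN hi1 hi2
  · rintro ⟨ht1, ht2⟩
    by_cases hc : 2^(Kv N) ≤ t
    · refine ⟨t + 1 - 2^(Kv N), ⟨by omega, by omega⟩, ?_⟩
      have hle : t + 1 - 2^(Kv N) ≤ Mv N := by unfold Mv; omega
      unfold mfun; rw [if_pos hle]; omega
    · refine ⟨t + N + 1 - 2^(Kv N), ⟨by omega, by omega⟩, ?_⟩
      have hgt : ¬ (t + N + 1 - 2^(Kv N) ≤ Mv N) := by unfold Mv; omega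
      unfold mfun; rw [if_neg hgt]; omega

lemma gap_eq {i : ℕ} (hi : 1 ≤ i) (hiN : i < N) :
    wfun N (i+1) - wfun N i =
      Real.logb 2 (((mfun N i + 1 : ℕ)) : ℝ) - Real.logb 2 ((mfun N i : ℕ) : ℝ) := by
  have h1 := hK1 hN; have h2 := hKN hN
  have hp : 0 < 2^(Kv N) := Nat.pow_pos (by norm_num)
  unfold wfun
  by_cases hc1 : i + 1 ≤ Mv N
  · have hc0 : i ≤ Mv N := by omega
    rw [if_pos hc0, if_pos hc1]
    have hm : mfun N (i+1) = mfun N i + 1 := by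
      unfold mfun; rw [if_pos hc0, if_pos hc1]; omega
    rw [hm]; ring
  · by_cases hc0 : i ≤ Mv N
    · have hiM : i = Mv N := by omega
      rw [if_pos hc0, if_neg hc1]
      have hmi : mfun N i = 2*N - 1 := by
        unfold mfun; rw [if_pos hc0]; unfold Mv at hiM; omega
      have hmi1 : mfun N (i+1) = N := by
        unfold mfun; rw [if_neg hc1]; unfold Mv at hiM; omega
      rw [hmi, hmi1]
      have hcast : ((2*N-1+1 : ℕ) : ℝ) = 2*((N:ℕ):ℝ) := by
        have : 1 ≤ 2*N := by omega
        push_cast [this]; ring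
      rw [hcast, logb_two_double (by positivity)]
      ring
    · rw [if_neg hc0, if_neg hc1]
      have hm : mfun N (i+1) = mfun N i + 1 := by
        unfold mfun; rw [if_neg hc0, if_neg hc1]
        unfold Mv at hc0
        omega
      rw [hm]; ring

lemma wrap_eq : wfun N 1 + 1 - wfun N N =
    Real.logb 2 (((mfun N N + 1 : ℕ)) : ℝ) - Real.logb 2 ((mfun N N : ℕ) : ℝ) := by
  have h1 := hK1 hN; have h2 := hKN hN
  have hp : 0 < 2^(Kv N) := Nat.pow_pos (by norm_num)
  rw [w1_eq hN]
  unfold wfun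
  by_cases hc : N ≤ Mv N
  · have h2K : 2^(Kv N) = N := by unfold Mv at hc; omega
    rw [if_pos hc]
    have hm : mfun N N = 2*N - 1 := by unfold mfun; rw [if_pos hc]; omega
    rw [hm]
    have hcast : ((2*N-1+1 : ℕ) : ℝ) = 2*((N:ℕ):ℝ) := by
      have : 1 ≤ 2*N := by omega
      push_cast [this]; ring
    rw [hcast, logb_two_double (by positivity)]
    have hlogN : Real.logb 2 ((N:ℕ):ℝ) = (Kv N : ℝ) := by
      rw [show ((N:ℕ):ℝ) = (2:ℝ)^(Kv N) by exact_mod_cast h2K.symm, logb_two_pow]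
    rw [hlogN]
    ring
  · rw [if_neg hc]
    have hm : mfun N N = 2^(Kv N) - 1 := by
      unfold mfun; rw [if_neg hc]; omega
    rw [hm]
    have hcast : ((2^(Kv N)-1+1 : ℕ) : ℝ) = (2:ℝ)^(Kv N) := by
      have h : 2^(Kv N)-1+1 = 2^(Kv N) := by omega
      rw [h]; push_cast; ring
    rw [hcast, logb_two_pow]
    ring

end facts

theorem gap_multiset (N : ℕ) (hN : 2 ≤ N) (y : ℕ → ℝ)
    (hmono : ∀ i j, 1 ≤ i → i ≤ j → j ≤ N → y i ≤ y j)
    (himg : Finset.image y (Finset.Icc 1 N) = Finset.image xseq (Finset.Icc 1 N)) :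
    Multiset.map (fun i => if i < N then y (i + 1) - y i else y 1 + 1 - y N)
        (Finset.Icc 1 N).val =
      Multiset.map (fun m => (Real.log ((m : ℝ) + 1) - Real.log (m : ℝ)) / Real.log 2)
        (Finset.Icc N (2 * N - 1)).val := by
  classical
  have hSw : Finset.image xseq (Finset.Icc 1 N) = Finset.image (wfun N) (Finset.Icc 1 N) := by
    rw [image_xseq N hN, ← image_m hN, Finset.image_image]
    apply Finset.image_congr
    intro i hi
    simp only [Finset.coe_Icc, Set.mem_Icc] at hi
    exact fract_m hN hi.1 hi.2
  have hcard : (Finset.Icc 1 N).card = N := by rw [Nat.card_Icc]; omega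
  have hinjw : Set.InjOn (wfun N) (Finset.Icc 1 N) := by
    intro a ha b hb hab
    simp only [Finset.coe_Icc, Set.mem_Icc] at ha hb
    rcases lt_trichotomy a b with h|h|h
    · exact absurd hab (ne_of_lt (w_strictmono hN ha.1 h hb.2))
    · exact h
    · exact absurd hab.symm (ne_of_lt (w_strictmono hN hb.1 h ha.2))
  have hScard : (Finset.image xseq (Finset.Icc 1 N)).card = N := by
    rw [hSw, Finset.card_image_of_injOn hinjw, hcard]
  have hinjy : Set.InjOn y (Finset.Icc 1 N) :=
    Finset.injOn_of_card_image_eq (by rw [himg, hScard, hcard])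
  have hmemIcc : ∀ j : Fin N, (j:ℕ)+1 ∈ Finset.Icc 1 N := by
    intro j
    have := j.isLt
    simp only [Finset.mem_Icc]
    omega
  have hF : StrictMono (fun j : Fin N => wfun N ((j:ℕ)+1)) := by
    intro a b hab
    have hb := b.isLt
    have hab' : (a:ℕ) < (b:ℕ) := hab
    exact w_strictmono hN (by omega) (by omega) (by omega)
  have hG : StrictMono (fun j : Fin N => y ((j:ℕ)+1)) := by
    intro a b hab
    have hb := b.isLt
    have hab' : (a:ℕ) < (b:ℕ) := hab
    have hle : y ((a:ℕ)+1) ≤ y ((b:ℕ)+1) := hmono _ _ (by omega) (by omega) (by omega)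
    have hne : y ((a:ℕ)+1) ≠ y ((b:ℕ)+1) := by
      intro heq
      have := hinjy (by simp only [Finset.coe_Icc, Set.mem_Icc]; omega)
        (by simp only [Finset.coe_Icc, Set.mem_Icc]; omega) heq
      omega
    exact lt_of_le_of_ne hle hne
  have hFv : ∀ j : Fin N, (fun j : Fin N => wfun N ((j:ℕ)+1)) j ∈
      Finset.image xseq (Finset.Icc 1 N) := by
    intro j; rw [hSw]; exact Finset.mem_image_of_mem _ (hmemIcc j)
  have hGv : ∀ j : Fin N, (fun j : Fin N => y ((j:ℕ)+1)) j ∈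
      Finset.image xseq (Finset.Icc 1 N) := by
    intro j; rw [← himg]; exact Finset.mem_image_of_mem _ (hmemIcc j)
  have hFeq := Finset.orderEmbOfFin_unique hScard hFv hF
  have hGeq := Finset.orderEmbOfFin_unique hScard hGv hG
  have hyw : ∀ i, 1 ≤ i → i ≤ N → y i = wfun N i := by
    intro i hi1 hi2
    have hlt : i - 1 < N := by omega
    have h := congrFun (hGeq.trans hFeq.symm) ⟨i-1, hlt⟩
    simpa [Nat.sub_add_cancel hi1] using h
  have hinjm : Set.InjOn (mfun N) (Finset.Icc 1 N) := by
    apply Finset.injOn_of_card_image_eq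
    rw [image_m hN, hcard, Nat.card_Icc]
    omega
  have hval : (Finset.Icc N (2*N-1)).val = Multiset.map (mfun N) (Finset.Icc 1 N).val := by
    rw [← image_m hN, Finset.image_val_of_injOn hinjm]
  have key : Multiset.map (fun i => if i < N then y (i + 1) - y i else y 1 + 1 - y N)
        (Finset.Icc 1 N).val =
      Multiset.map ((fun t : ℕ =>
          (Real.log ((t:ℝ) + 1) - Real.log ((t:ℝ))) / Real.log 2) ∘ mfun N)
        (Finset.Icc 1 N).val := by
    apply Multiset.map_congr rfl
    intro i hi
    have hi' : 1 ≤ i ∧ i ≤ N := Finset.mem_Icc.mp (Finset.mem_def.mpr hi)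
    simp only [Function.comp]
    have hconv : ∀ t : ℕ, Real.logb 2 (((t + 1 : ℕ)) : ℝ) - Real.logb 2 ((t : ℕ) : ℝ) =
        (Real.log ((t : ℝ) + 1) - Real.log (t : ℝ)) / Real.log 2 := by
      intro t
      rw [← Real.log_div_log, ← Real.log_div_log, div_sub_div_same]
      push_cast
      ring_nf
    by_cases hlt : i < N
    · rw [if_pos hlt, hyw i hi'.1 (by omega), hyw (i+1) (by omega) (by omega),
        gap_eq hN hi'.1 hlt, hconv]
    · have hiN : i = N := by omega
      rw [hiN, if_neg (lt_irrefl N), hyw 1 le_rfl (by omega), hyw N (by omega) le_rfl,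
        wrap_eq hN, hconv]
  rw [key, ← Multiset.map_map, ← hval]
  simp [Multiset.map_map]
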